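/- Let G be a graph and v a vertex of G. Let T be the set of neighbors u of v for which there exists another neighbor w of v with w not adjacent to u in G (i.e., the neighbors of v incident to at least one edge added in forming G/v), and let t = |T|. If G/v and G − ({v} ∪ T) each have at least 2 vertices, then st_D(G/v) ≤ st_D(G − ({v} ∪ T)) + t. -/
import Mathlib


open SimpleGraph

/-- The distinguishing number of a graph: the least `d` such that there is a vertex
labeling with `d` labels preserved only by the trivial automorphism. -/
noncomputable def distNum {V : Type*} (G : SimpleGraph V) : ℕ :=
  sInf {d : ℕ | ∃ f : V → Fin d, ∀ φ : G ≃g G, (∀ x, f (φ x) = f x) → ∀ x, φ x = x}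

/-- The distinguishing stability of a graph: the minimum cardinality of a proper subset
`S` of the vertex set whose removal changes the distinguishing number. -/
noncomputable def stD {V : Type*} (G : SimpleGraph V) : ℕ :=
  sInf {k : ℕ | ∃ S : Set V, S ≠ Set.univ ∧ S.ncard = k ∧
    distNum (G.induce Sᶜ) ≠ distNum G}

/-- The distinguishing bondage number of a graph: the minimum cardinality of a set
of edges whose removal changes the distinguishing number. -/
noncomputable def bD {V : Type*} (G : SimpleGraph V) : ℕ :=
  sInf {k : ℕ | ∃ F : Set (Sym2 V), F ⊆ G.edgeSet ∧ F.ncard = k ∧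
    distNum (G.deleteEdges F) ≠ distNum G}

/-- The contraction $G/v$: delete $v$ and put a clique on its open neighborhood. -/
def vertexContraction {V : Type*} (G : SimpleGraph V) (v : V) :
    SimpleGraph {x : V // x ≠ v} :=
  SimpleGraph.fromRel (fun x y => G.Adj (x : V) (y : V) ∨ (G.Adj (x : V) v ∧ G.Adj (y : V) v))

lemma distSet_mono {A B : Type*} {H1 : SimpleGraph A} {H2 : SimpleGraph B} (e : H1 ≃g H2) (d : ℕ)
    (h : ∃ f : A → Fin d, ∀ φ : H1 ≃g H1, (∀ x, f (φ x) = f x) → ∀ x, φ x = x) :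
    ∃ f : B → Fin d, ∀ φ : H2 ≃g H2, (∀ x, f (φ x) = f x) → ∀ x, φ x = x := by
  obtain ⟨f, hf⟩ := h
  refine ⟨f ∘ e.symm, fun φ hφ x => ?_⟩
  have hψ : ∀ y, ((e.trans φ).trans e.symm) y = y := by
    refine hf _ (fun y => ?_)
    show f (e.symm (φ (e y))) = f y
    have := hφ (e y)
    simp only [Function.comp] at this
    rw [this]
    simp
  have h2 : e (((e.trans φ).trans e.symm) (e.symm x)) = e (e.symm x) := by rw [hψ]
  show φ x = x
  calc φ x = φ (e (e.symm x)) := by simp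
    _ = e (e.symm (φ (e (e.symm x)))) := by simp
    _ = e (((e.trans φ).trans e.symm) (e.symm x)) := rfl
    _ = e (e.symm x) := h2
    _ = x := by simp

lemma distNum_congr {A B : Type*} {H1 : SimpleGraph A} {H2 : SimpleGraph B} (e : H1 ≃g H2) :
    distNum H1 = distNum H2 := by
  unfold distNum
  congr 1
  ext d
  exact ⟨distSet_mono e d, distSet_mono e.symm d⟩
lemma distNum_subsingleton {W : Type*} [Nonempty W] [Subsingleton W] (H : SimpleGraph W) :
    distNum H = 1 := by
  unfold distNum
  have h1 : 1 ∈ {d : ℕ | ∃ f : W → Fin d, ∀ φ : H ≃g H, (∀ x, f (φ x) = f x) → ∀ x, φ x = x} :=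
    ⟨fun _ => 0, fun φ _ x => Subsingleton.elim _ _⟩
  refine le_antisymm (Nat.sInf_le h1) ?_
  refine le_csInf ⟨1, h1⟩ (fun b hb => ?_)
  rcases Nat.eq_zero_or_pos b with rfl | h
  · obtain ⟨f, -⟩ := hb
    exact (f (Classical.arbitrary W)).elim0
  · exact h

lemma distNum_pair {W : Type*} (H : SimpleGraph W) (a b : W) (hab : a ≠ b)
    (hall : ∀ x, x = a ∨ x = b) : distNum H = 2 := by
  classical
  unfold distNum
  have h2 : 2 ∈ {d : ℕ | ∃ f : W → Fin d, ∀ φ : H ≃g H, (∀ x, f (φ x) = f x) → ∀ x, φ x = x} := by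
    refine ⟨fun x => if x = a then 0 else 1, fun φ hφ x => ?_⟩
    have hinj : ∀ y z : W, (if y = a then (0:Fin 2) else 1) = (if z = a then 0 else 1) → y = z := by
      intro y z h
      rcases hall y with rfl | rfl <;> rcases hall z with rfl | rfl <;>
        simp_all [hab, hab.symm]
    exact hinj _ _ (hφ x)
  refine le_antisymm (Nat.sInf_le h2) ?_
  refine le_csInf ⟨2, h2⟩ (fun d hd => ?_)
  obtain ⟨f, hf⟩ := hd
  rcases d with - | - | d
  · exact (f a).elim0
  · exfalso
    have hswap : ∀ x y : W, H.Adj (Equiv.swap a b x) (Equiv.swap a b y) ↔ H.Adj x y := by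
      intro x y
      rcases hall x with rfl | rfl <;> rcases hall y with rfl | rfl
      · simp
      · rw [Equiv.swap_apply_left, Equiv.swap_apply_right]; exact H.adj_comm _ _
      · rw [Equiv.swap_apply_left, Equiv.swap_apply_right]; exact H.adj_comm _ _
      · simp
    have hone : ∀ u w : Fin (0+1), u = w := by decide
    have hA := hf ⟨Equiv.swap a b, @fun x y => hswap x y⟩ (fun x => hone _ _) a
    have hA' : Equiv.swap a b a = a := hA
    rw [Equiv.swap_apply_left] at hA'
    exact hab hA'.symm
  · omega
lemma stD_set_nonempty {W : Type*} [Finite W] (H : SimpleGraph W) (h : 2 ≤ Nat.card W) :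
    {k : ℕ | ∃ S : Set W, S ≠ Set.univ ∧ S.ncard = k ∧
      distNum (H.induce Sᶜ) ≠ distNum H}.Nonempty := by
  have : Nontrivial W := by
    have := Fintype.ofFinite W
    rw [Nat.card_eq_fintype_card] at h
    exact Fintype.one_lt_card_iff_nontrivial.mp h
  obtain ⟨a, b, hab⟩ := this
  by_cases h1 : distNum H = 1
  · refine ⟨(({a, b} : Set W)ᶜ).ncard, ({a, b} : Set W)ᶜ, ?_, rfl, ?_⟩
    · intro hu
      have : a ∈ (({a, b} : Set W)ᶜ) := hu ▸ Set.mem_univ a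
      exact this (by simp)
    · have hc : (({a, b} : Set W)ᶜ)ᶜ = {a, b} := compl_compl _
      rw [hc, h1]
      have := distNum_pair (H.induce ({a, b} : Set W))
        (⟨a, by simp⟩ : ({a, b} : Set W)) ⟨b, by simp⟩
        (by simp [Subtype.ext_iff, hab])
        (fun x => by
          rcases x.2 with h | h
          · exact Or.inl (Subtype.ext h)
          · exact Or.inr (Subtype.ext h))
      omega
  · refine ⟨(({a} : Set W)ᶜ).ncard, ({a} : Set W)ᶜ, ?_, rfl, ?_⟩
    · intro hu
      have : a ∈ (({a} : Set W)ᶜ) := hu ▸ Set.mem_univ a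
      exact this rfl
    · have hc : (({a} : Set W)ᶜ)ᶜ = {a} := compl_compl _
      rw [hc]
      haveI : Unique (↥({a} : Set W)) := Set.uniqueSingleton a
      rw [distNum_subsingleton]
      exact fun hh => h1 hh.symm
lemma contraction_adj {V : Type*} (G : SimpleGraph V) (v : V) (T : Set V)
    (hT : T = {u : V | G.Adj v u ∧ ∃ w : V, G.Adj v w ∧ w ≠ u ∧ ¬ G.Adj w u})
    (x y : V) (hx : x ≠ v) (hy : y ≠ v) (hxT : x ∉ T) (hyT : y ∉ T) :
    (vertexContraction G v).Adj ⟨x, hx⟩ ⟨y, hy⟩ ↔ G.Adj x y := by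
  rw [vertexContraction, fromRel_adj]
  constructor
  · rintro ⟨hne, (h | ⟨hxv, hyv⟩) | (h | ⟨hyv, hxv⟩)⟩
    · exact h
    · by_contra hnadj
      refine hxT ?_
      rw [hT]
      exact ⟨hxv.symm, y, hyv.symm, fun h => hne (Subtype.ext h.symm), fun h => hnadj h.symm⟩
    · exact h.symm
    · by_contra hnadj
      refine hxT ?_
      rw [hT]
      exact ⟨hxv.symm, y, hyv.symm, fun h => hne (Subtype.ext h.symm), fun h => hnadj h.symm⟩
  · intro h
    exact ⟨fun he => h.ne (congrArg Subtype.val he), Or.inl (Or.inl h)⟩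

/-- Iso between the contraction with a superset `U` of `T` removed, and `G` with
`{v} ∪ U` removed. -/
noncomputable def isoA {V : Type*} (G : SimpleGraph V) (v : V) (T : Set V)
    (hT : T = {u : V | G.Adj v u ∧ ∃ w : V, G.Adj v w ∧ w ≠ u ∧ ¬ G.Adj w u})
    (U : Set V) (hTU : T ⊆ U) :
    ((vertexContraction G v).induce {x : {y : V // y ≠ v} | (x : V) ∈ U}ᶜ) ≃g
      (G.induce (insert v U : Set V)ᶜ) where
  toFun := fun x => ⟨x.1.1, by
    intro hmem
    rcases Set.mem_insert_iff.mp hmem with h | h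
    · exact x.1.2 h
    · exact x.2 h⟩
  invFun := fun w => ⟨⟨w.1, fun h => w.2 (by rw [h]; exact Set.mem_insert v U)⟩,
    fun h => w.2 (Set.mem_insert_iff.mpr (Or.inr h))⟩
  left_inv := fun x => by ext; rfl
  right_inv := fun w => by ext; rfl
  map_rel_iff' := by
    intro x y
    simp only [comap_adj, Function.Embedding.coeFn_mk, Equiv.coe_fn_mk]
    show G.Adj x.1.1 y.1.1 ↔ (vertexContraction G v).Adj x.1 y.1
    rw [show (x.1 : {y : V // y ≠ v}) = ⟨x.1.1, x.1.2⟩ from rfl,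
        show (y.1 : {y : V // y ≠ v}) = ⟨y.1.1, y.1.2⟩ from rfl,
        contraction_adj G v T hT _ _ x.1.2 y.1.2 (fun h => x.2 (hTU h)) (fun h => y.2 (hTU h))]

/-- Iso for a double induced subgraph. -/
noncomputable def isoB {V : Type*} (G : SimpleGraph V) (C : Set V) (S : Set (↥(Cᶜ))) :
    ((G.induce Cᶜ).induce Sᶜ) ≃g (G.induce (C ∪ (Subtype.val '' S))ᶜ) where
  toFun := fun x => ⟨x.1.1, by
    intro hmem
    rcases hmem with h | h
    · exact x.1.2 h
    · obtain ⟨z, hz, hz2⟩ := h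
      exact x.2 (by rwa [← Subtype.ext hz2.symm] at hz)⟩
  invFun := fun w => ⟨⟨w.1, fun h => w.2 (Or.inl h)⟩,
    fun h => w.2 (Or.inr ⟨_, h, rfl⟩)⟩
  left_inv := fun x => by ext; rfl
  right_inv := fun w => by ext; rfl
  map_rel_iff' := by
    intro x y
    simp only [comap_adj, Function.Embedding.coeFn_mk, Equiv.coe_fn_mk]
    rfl

/-- $st_D(G/v) \le st_D(G - (\{v\} \cup T)) + |T|$ where $T$ is the set of neighbours of $v$
incident to an edge added in forming $G/v$. -/
theorem stD_vertexContraction {V : Type*} [Fintype V] (G : SimpleGraph V) (v : V)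
    (T : Set V)
    (hT : T = {u : V | G.Adj v u ∧ ∃ w : V, G.Adj v w ∧ w ≠ u ∧ ¬ G.Adj w u})
    (h1 : 2 ≤ Nat.card {x : V // x ≠ v})
    (h2 : 2 ≤ Nat.card ((insert v T : Set V)ᶜ : Set V)) :
    stD (vertexContraction G v) ≤ stD (G.induce (insert v T : Set V)ᶜ) + T.ncard := by
  classical
  set C : Set V := insert v T with hC
  have hvT : v ∉ T := by
    rw [hT]; rintro ⟨h, -⟩; exact G.irrefl h
  have hpre : ∀ A : Set V, v ∉ A →
      ({x : {y : V // y ≠ v} | (x : V) ∈ A} : Set {y : V // y ≠ v}).ncard = A.ncard := by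
    intro A hA
    have : ({x : {y : V // y ≠ v} | (x : V) ∈ A} : Set {y : V // y ≠ v}) =
        Subtype.val ⁻¹' A := rfl
    rw [this]
    apply Set.ncard_preimage_of_injective_subset_range Subtype.val_injective
    rw [Subtype.range_coe_subtype]
    exact fun x hx h => hA (h ▸ hx)
  have hCne : Nonempty (↥(Cᶜ)) := by
    rcases (Nat.card_pos_iff.mp (by omega : 0 < Nat.card (↥(Cᶜ)))) with ⟨h, -⟩
    exact h
  by_cases hEq : distNum (vertexContraction G v) = distNum (G.induce Cᶜ)
  · -- equal case: use a minimal witness for the induced graph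
    have hne := stD_set_nonempty (G.induce Cᶜ) h2
    obtain ⟨S, hSu, hScard, hSdiff⟩ := Nat.sInf_mem hne
    set S' : Set V := Subtype.val '' S with hS'
    have hS'sub : S' ⊆ Cᶜ := by rintro _ ⟨z, hz, rfl⟩; exact z.2
    have hvS' : v ∉ T ∪ S' := by
      rintro (h | h)
      · exact hvT h
      · exact hS'sub h (Set.mem_insert v T)
    have hdis : Disjoint T S' := by
      refine Set.disjoint_left.mpr (fun x hx hx' => ?_)
      exact hS'sub hx' (Set.mem_insert_iff.mpr (Or.inr hx))
    have hmem : (T.ncard + stD (G.induce Cᶜ)) ∈ {k : ℕ |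
        ∃ S₁ : Set {x : V // x ≠ v}, S₁ ≠ Set.univ ∧ S₁.ncard = k ∧
          distNum ((vertexContraction G v).induce S₁ᶜ) ≠
            distNum (vertexContraction G v)} := by
      refine ⟨{x : {y : V // y ≠ v} | (x : V) ∈ T ∪ S'}, ?_, ?_, ?_⟩
      · obtain ⟨a, ha⟩ := (Set.ne_univ_iff_exists_notMem S).mp hSu
        rw [Set.ne_univ_iff_exists_notMem]
        refine ⟨⟨a.1, fun h => a.2 (h ▸ Set.mem_insert v T)⟩, ?_⟩
        rintro (h | h)
        · exact a.2 (Set.mem_insert_iff.mpr (Or.inr h))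
        · obtain ⟨z, hz, hz2⟩ := h
          have hza : z = a := Subtype.ext hz2
          exact ha (hza ▸ hz)
      · rw [hpre _ hvS', Set.ncard_union_eq hdis (Set.toFinite _) (Set.toFinite _),
          Set.ncard_image_of_injective _ Subtype.val_injective, hScard]
        rfl
      · have e1 := distNum_congr (isoA G v T hT (T ∪ S') Set.subset_union_left)
        have hset : (insert v (T ∪ S') : Set V) = C ∪ S' := by
          rw [hC, Set.insert_union]
        have e2 := distNum_congr (isoB G C S)
        rw [e1, hset, ← e2, hEq]
        exact hSdiff
    calc stD (vertexContraction G v) ≤ T.ncard + stD (G.induce Cᶜ) := Nat.sInf_le hmem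
      _ = _ := add_comm _ _
  · -- unequal case: remove T itself
    have hmem : T.ncard ∈ {k : ℕ |
        ∃ S₁ : Set {x : V // x ≠ v}, S₁ ≠ Set.univ ∧ S₁.ncard = k ∧
          distNum ((vertexContraction G v).induce S₁ᶜ) ≠
            distNum (vertexContraction G v)} := by
      refine ⟨{x : {y : V // y ≠ v} | (x : V) ∈ T}, ?_, hpre T hvT, ?_⟩
      · obtain ⟨a⟩ := hCne
        rw [Set.ne_univ_iff_exists_notMem]
        exact ⟨⟨a.1, fun h => a.2 (h ▸ Set.mem_insert v T)⟩,
          fun h => a.2 (Set.mem_insert_iff.mpr (Or.inr h))⟩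
      · rw [distNum_congr (isoA G v T hT T subset_rfl)]
        exact fun h => hEq h.symm
    calc stD (vertexContraction G v) ≤ T.ncard := Nat.sInf_le hmem
      _ ≤ _ := Nat.le_add_left _ _
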